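/- If W is an infinite word whose recurrence function satisfies P₂(k) ≤ C·k for all k, then its factor complexity is at most linear: P(N) ≤ (C-1)·N + 1 for all N. -/
import Mathlib


/-- The factor (subword) of the infinite word `W` of length `n` starting at position `i`. -/
def factorAt {A : Type*} (W : ℕ → A) (i n : ℕ) : List A :=
  (List.range n).map (fun j => W (i + j))

/-- `u` is a finite factor of the infinite word `W`. -/
def IsFactorOf {A : Type*} (u : List A) (W : ℕ → A) : Prop :=
  ∃ i, u = factorAt W i u.length

@[simp] lemma factorAt_length {A : Type*} (W : ℕ → A) (i n : ℕ) :
    (factorAt W i n).length = n := by simp [factorAt]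

lemma factorAt_getElem {A : Type*} (W : ℕ → A) (i n j : ℕ) (hj : j < (factorAt W i n).length) :
    (factorAt W i n)[j] = W (i + j) := by
  simp [factorAt]

/-- Linear recurrence implies linear factor complexity: P(N) ≤ (C-1)·N + 1. -/
theorem stmt5 {A : Type*} [Fintype A] (W : ℕ → A) (C : ℕ)
    (hrec : ∀ k : ℕ, ∀ u v : List A, IsFactorOf u W → u.length = C * k →
      IsFactorOf v W → v.length = k → v <:+: u) :
    ∀ N : ℕ, Set.ncard {u : List A | IsFactorOf u W ∧ u.length = N} ≤ (C - 1) * N + 1 := by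
  intro N
  set u : List A := factorAt W 0 (C * N) with hu_def
  have hu : IsFactorOf u W := ⟨0, by simp [hu_def]⟩
  have hulen : u.length = C * N := by simp [hu_def]
  have hsub : {v : List A | IsFactorOf v W ∧ v.length = N} ⊆
      (fun t => factorAt W t N) '' Set.Iio (C * N - N + 1) := by
    rintro v ⟨hv, hvlen⟩
    obtain ⟨s, t, hst⟩ := hrec N u v hu hulen hv hvlen
    have hlen : s.length + N ≤ C * N := by
      have := congrArg List.length hst
      simp [hulen, hvlen] at this
      omega
    refine ⟨s.length, by simp; omega, ?_⟩
    apply List.ext_getElem (by simp [hvlen])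
    intro j hj1 hj2
    have hjN : j < N := by simpa [hvlen] using hj2
    have hidx : s.length + j < u.length := by omega
    have h1 : u[s.length + j]'hidx = W (s.length + j) := by
      simpa using factorAt_getElem W 0 (C * N) (s.length + j) (by simpa [hu_def] using hidx)
    have h2 : u[s.length + j]'hidx = v[j]'hj2 := by
      rw [← hst] at hidx
      simp only [← hst]
      rw [List.getElem_append_left (by simp; omega)]
      rw [List.getElem_append_right (by omega)]
      congr 1
      omega
    rw [factorAt_getElem, ← h1, h2]
  have hfin : (Set.Iio (C * N - N + 1)).Finite := Set.finite_Iio _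
  calc Set.ncard {v : List A | IsFactorOf v W ∧ v.length = N}
      ≤ Set.ncard ((fun t => factorAt W t N) '' Set.Iio (C * N - N + 1)) :=
        Set.ncard_le_ncard hsub (hfin.image _)
    _ ≤ Set.ncard (Set.Iio (C * N - N + 1)) := Set.ncard_image_le hfin
    _ = C * N - N + 1 := by rw [Set.ncard_eq_toFinset_card']; simp
    _ ≤ (C - 1) * N + 1 := by rw [Nat.sub_mul]; omega
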